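/- Let A be a bounded self-adjoint operator, x an eigenvector of A with eigenvalue λ, and y a nonzero vector with 0 < ∠{x,y} < π/2. Let S = span{x,y} with orthogonal projector P_S. Then |λ − ρ(y)| = (‖P_S r(y)‖/‖y‖)·tan(∠{x,y}), where r(y) = Ay − ρ(y)y. -/

import Mathlib

open scoped RealInnerProductSpace
open Submodule

noncomputable section

variable {H : Type*} [NormedAddCommGroup H] [InnerProductSpace ℝ H]

/-- The Rayleigh quotient of `x` with respect to `A`. -/
def rq (A : H →L[ℝ] H) (x : H) : ℝ := ⟪x, A x⟫ / ⟪x, x⟫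

/-- The residual of `x` with respect to `A`. -/
def res (A : H →L[ℝ] H) (x : H) : H := A x - rq A x • x

/-- The acute angle between two vectors. -/
def ang (x y : H) : ℝ := Real.arccos (|⟪x, y⟫| / (‖x‖ * ‖y‖))

/-- If `x` is an eigenvector of `A` with eigenvalue `λ`, `y` is nonzero with
`0 < ∠{x,y} < π/2`, and `S = span{x,y}`, then
`|λ − ρ(y)| = (‖P_S r(y)‖/‖y‖)·tan∠{x,y}`. -/
theorem stmt_14 [CompleteSpace H] (A : H →L[ℝ] H) (hA : IsSelfAdjoint A)
    (lam : ℝ) (x : H) (hx : x ≠ 0) (heig : A x = lam • x)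
    (y : H) (hy : y ≠ 0)
    (hang₀ : 0 < ang x y) (hang₁ : ang x y < Real.pi / 2)
    (S : Submodule ℝ H) [FiniteDimensional ℝ S]
    (hS : S = Submodule.span ℝ ({x, y} : Set H)) :
    |lam - rq A y|
      = ‖(orthogonalProjection S (res A y) : H)‖ / ‖y‖ * Real.tan (ang x y) := by
  have hxn : (0:ℝ) < ‖x‖ := norm_pos_iff.2 hx
  have hyn : (0:ℝ) < ‖y‖ := norm_pos_iff.2 hy
  set c : ℝ := |⟪x, y⟫| / (‖x‖ * ‖y‖) with hc
  have hc1 : c ≤ 1 := by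
    rw [hc, div_le_one (by positivity)]
    exact abs_real_inner_le_norm x y
  have hc0 : (0:ℝ) ≤ c := by positivity
  have hclt : c < 1 := Real.arccos_pos.1 hang₀
  have hcpos : 0 < c := Real.arccos_lt_pi_div_two.1 hang₁
  have hcos : Real.cos (ang x y) = c := Real.cos_arccos (by linarith) hc1
  have hsin : Real.sin (ang x y) = Real.sqrt (1 - c ^ 2) := Real.sin_arccos c
  have hspos : (0:ℝ) < Real.sqrt (1 - c ^ 2) := by
    apply Real.sqrt_pos.2; nlinarith
  have hyy' : ⟪y, y⟫ = ‖y‖ ^ 2 := real_inner_self_eq_norm_sq y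
  have hxx' : ⟪x, x⟫ = ‖x‖ ^ 2 := real_inner_self_eq_norm_sq x
  have hyy : ⟪y, y⟫ ≠ 0 := by rw [hyy']; positivity
  have hsym : ∀ v w : H, ⟪A v, w⟫ = ⟪v, A w⟫ :=
    ContinuousLinearMap.isSelfAdjoint_iff_isSymmetric.mp hA
  set ρ : ℝ := rq A y with hρ
  set r : H := res A y with hr
  set d : ℝ := ⟪y, x⟫ / ⟪y, y⟫ with hd
  set u : H := x - d • y with hu
  have h_yu : ⟪y, u⟫ = 0 := by
    rw [hu, inner_sub_right, real_inner_smul_right, hd]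
    field_simp
    ring
  have h_uy : ⟪u, y⟫ = 0 := by rw [real_inner_comm]; exact h_yu
  have h_yr : ⟪y, r⟫ = 0 := by
    rw [hr, res, inner_sub_right, real_inner_smul_right]
    simp only [rq]
    field_simp
    ring
  have h_xr : ⟪x, r⟫ = (lam - ρ) * ⟪x, y⟫ := by
    rw [hr, res, inner_sub_right, real_inner_smul_right, ← hsym, heig,
      real_inner_smul_left, ← hρ]
    ring
  have h_ur : ⟪u, r⟫ = (lam - ρ) * ⟪x, y⟫ := by
    rw [hu, inner_sub_left, real_inner_smul_left, h_yr, h_xr]; ring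
  have hxy2 : ⟪x, y⟫ ^ 2 = c ^ 2 * (‖x‖ ^ 2 * ‖y‖ ^ 2) := by
    rw [hc, div_pow, sq_abs, mul_pow]
    field_simp
  have h_uu : ⟪u, u⟫ = ‖x‖ ^ 2 * (1 - c ^ 2) := by
    have : ⟪u, u⟫ = ⟪x, u⟫ := by
      rw [hu, inner_sub_left, real_inner_smul_left, h_yu]; ring
    have hyx : ⟪y, x⟫ = ⟪x, y⟫ := real_inner_comm x y
    rw [this, hu, inner_sub_right, real_inner_smul_right, hd, hxx', hyx, hyy']
    field_simp
    linear_combination -hxy2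
  have h_uupos : 0 < ⟪u, u⟫ := by
    rw [h_uu]
    have h1 : (0:ℝ) < 1 - c ^ 2 := by nlinarith
    positivity
  have h_unorm : ‖u‖ = ‖x‖ * Real.sqrt (1 - c ^ 2) := by
    rw [← Real.sqrt_sq (norm_nonneg u), ← real_inner_self_eq_norm_sq, h_uu,
      Real.sqrt_mul (by positivity) _, Real.sqrt_sq (norm_nonneg x)]
  have hxS : x ∈ S := by rw [hS]; exact subset_span (by simp)
  have hyS : y ∈ S := by rw [hS]; exact subset_span (by simp)
  have huS : u ∈ S := S.sub_mem hxS (S.smul_mem _ hyS)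
  set w : H := (⟪u, r⟫ / ⟪u, u⟫) • u with hw
  have hwS : w ∈ S := S.smul_mem _ huS
  have hproj : (orthogonalProjection S r : H) = w := by
    apply Submodule.eq_starProjection_of_mem_of_inner_eq_zero hwS
    intro z hz
    rw [hS, Submodule.mem_span_pair] at hz
    obtain ⟨a, b, rfl⟩ := hz
    have hne : ⟪u, u⟫ ≠ 0 := h_uupos.ne'
    have hru : ⟪r, u⟫ = ⟪u, r⟫ := real_inner_comm u r
    have hry0 : ⟪r, y⟫ = 0 := by rw [real_inner_comm]; exact h_yr
    have hrx : ⟪r - w, x⟫ = 0 := by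
      have hx' : x = u + d • y := by rw [hu]; abel
      rw [hx', inner_add_right, inner_sub_left, inner_sub_left,
        real_inner_smul_right, real_inner_smul_right, hw,
        real_inner_smul_left, real_inner_smul_left, h_uy, hru, hry0]
      field_simp
      ring
    have hry : ⟪r - w, y⟫ = 0 := by
      rw [inner_sub_left, hw, real_inner_smul_left, h_uy, hry0]
      ring
    rw [inner_add_right, real_inner_smul_right, real_inner_smul_right, hrx, hry]
    ring
  have hun : ‖u‖ ≠ 0 := by rw [h_unorm]; positivity
  have hwn : ‖(orthogonalProjection S r : H)‖ = |lam - ρ| * |⟪x, y⟫| / ‖u‖ := by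
    rw [hproj, hw, norm_smul, Real.norm_eq_abs, abs_div, abs_of_pos h_uupos,
      h_ur, abs_mul, real_inner_self_eq_norm_sq u]
    field_simp
  have habs : |⟪x, y⟫| = c * (‖x‖ * ‖y‖) := by
    rw [hc]; field_simp
  rw [hwn, Real.tan_eq_sin_div_cos, hsin, hcos, h_unorm, habs]
  field_simp
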